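/- Let K be a Kekulé cell over a finite set P and let g ⊆ P. Then the translated cell g ⊕ K = { g ⊕ k | k ∈ K } is also a Kekulé cell over P. -/
import Mathlib


open scoped symmDiff

namespace Kekule

abbrev Node := ℕ
abbrev Graph := Finset (Finset Node)

/-- `G` is a graph: every edge is a 2-element set of nodes. -/
def IsGraph (G : Graph) : Prop := ∀ e ∈ G, e.card = 2

/-- The nodes of a graph: the elements of its edges. -/
def nodes (G : Graph) : Finset Node := G.biUnion id

/-- The number of edges of `G` containing `v`. -/
def deg (G : Graph) (v : Node) : ℕ := (G.filter (fun e => v ∈ e)).card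

/-- A port is a node contained in exactly one edge. -/
def ports (G : Graph) : Finset Node := (nodes G).filter (fun v => deg G v = 1)

/-- An internal node is a node that is not a port. -/
def internal (G : Graph) : Finset Node := (nodes G).filter (fun v => deg G v ≠ 1)

/-- A Kekulé state of `G`: a subgraph `W ⊆ G` such that every internal node
of `G` lies in exactly one edge of `W`. -/
def IsKekule (G W : Graph) : Prop := W ⊆ G ∧ ∀ v ∈ internal G, deg W v = 1

/-- A curve in `G`: a subgraph `C ⊆ G` such that every node of `C` that is
internal in `G` lies in exactly two edges of `C`. -/
def IsCurve (G C : Graph) : Prop :=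
  C ⊆ G ∧ ∀ v ∈ nodes C, v ∈ internal G → deg C v = 2

/-- `(C, W)` is an alternating curve in `G`: both are subgraphs of `G`,
`C` is a curve in `G`, and `W ∩ C` is a Kekulé state of `C`. -/
def IsAlternating (G C W : Graph) : Prop :=
  W ⊆ G ∧ IsCurve G C ∧ IsKekule C (W ∩ C)

/-- `W|P`: the set of ports in `P` that lie in some edge of `W`. -/
def rest (W : Graph) (P : Finset Node) : Finset Node := P ∩ nodes W

/-- The set of Kekulé port assignments of `G`. -/
def KP (G : Graph) : Set (Finset Node) :=
  {g | ∃ W, IsKekule G W ∧ rest W (ports G) = g}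

/-- A cell `K` over `P` is a Kekulé cell if it is the set of Kekulé port
assignments of some graph with port set `P`. -/
def IsKekuleCell (P : Finset Node) (K : Set (Finset Node)) : Prop :=
  ∃ G, IsGraph G ∧ ports G = P ∧ KP G = K

/-- A channel: a 2-element subset of `P`. -/
def IsChannel (P : Finset Node) (c : Finset Node) : Prop := c ⊆ P ∧ c.card = 2

/-- A port `p` is flexible for a cell `K`. -/
def Flexible (K : Set (Finset Node)) (p : Node) : Prop :=
  ∃ g ∈ K, ∃ g' ∈ K, p ∈ g ∧ p ∉ g'

/-- Hamming distance between two port assignments. -/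
def hdist (k k' : Finset Node) : ℕ := (k ∆ k').card

/-- The Hamming diameter of `K` equals `n`. -/
def HamDiamEq (K : Set (Finset Node)) (n : ℕ) : Prop :=
  (∃ k ∈ K, ∃ k' ∈ K, hdist k k' = n) ∧ ∀ k ∈ K, ∀ k' ∈ K, hdist k k' ≤ n

/-- `G` is connected: nonempty, and any two distinct nodes are joined by a walk. -/
def Connected (G : Graph) : Prop :=
  G.Nonempty ∧ ∀ p ∈ nodes G, ∀ q ∈ nodes G, p ≠ q →
    ∃ (n : ℕ) (f : ℕ → Node), f 0 = p ∧ f n = q ∧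
      ∀ i < n, ({f i, f (i + 1)} : Finset Node) ∈ G

/-- `C` is a simple path between `p` and `q`. -/
def IsSimplePath (C : Graph) (p q : Node) : Prop :=
  Connected C ∧ ports C = {p, q} ∧
    ∀ v ∈ nodes C, v ≠ p → v ≠ q → deg C v = 2

/-- A cycle: a connected graph all of whose nodes lie in exactly two edges. -/
def IsCycle (C : Graph) : Prop :=
  Connected C ∧ ∀ v ∈ nodes C, deg C v = 2

/-- A semi-Kekulé state of `G`: every internal node of `G` lies in an odd
number of edges of `W`. -/
def IsSemiKekule (G W : Graph) : Prop :=
  W ⊆ G ∧ ∀ v ∈ internal G, deg W v % 2 = 1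

/-- The signature of `G`. -/
def sig (G : Graph) : ℕ := (internal G).card % 2

/-- `G` is omniconjugated. -/
def Omniconjugated (G : Graph) : Prop :=
  2 ≤ (ports G).card ∧ KP G = {g | g ⊆ ports G ∧ g.card % 2 = sig G}

instance : Std.Commutative (α := Finset Node) (· ∆ ·) := ⟨symmDiff_comm⟩
instance : Std.Associative (α := Finset Node) (· ∆ ·) := ⟨symmDiff_assoc⟩

/-- The `⊕`-sum of a finite family of port assignments. -/
def xorSum (D : Finset (Finset Node)) : Finset Node := D.fold (· ∆ ·) ∅ id

/-! ### Auxiliary lemmas -/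

lemma mem_nodes {G : Graph} {v : Node} : v ∈ nodes G ↔ ∃ e ∈ G, v ∈ e := by
  simp [nodes]

lemma deg_ne_zero {G : Graph} {v : Node} : deg G v ≠ 0 ↔ v ∈ nodes G := by
  rw [deg, Ne, Finset.card_eq_zero, ← Ne, ← Finset.nonempty_iff_ne_empty,
    Finset.filter_nonempty_iff, mem_nodes]

lemma mem_ports {G : Graph} {v : Node} : v ∈ ports G ↔ deg G v = 1 := by
  simp only [ports, Finset.mem_filter]
  refine ⟨And.right, fun h => ⟨deg_ne_zero.mp (by omega), h⟩⟩

lemma mem_internal {G : Graph} {v : Node} :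
    v ∈ internal G ↔ deg G v ≠ 0 ∧ deg G v ≠ 1 := by
  simp only [internal, Finset.mem_filter, ← deg_ne_zero]

lemma mem_rest {W : Graph} {P : Finset Node} {v : Node} :
    v ∈ rest W P ↔ v ∈ P ∧ deg W v ≠ 0 := by
  simp only [rest, Finset.mem_inter, deg_ne_zero]

lemma deg_mono {W G : Graph} (h : W ⊆ G) (v : Node) : deg W v ≤ deg G v :=
  Finset.card_le_card (Finset.filter_subset_filter _ h)

lemma deg_insert {G : Graph} {e : Finset Node} (h : e ∉ G) (v : Node) :
    deg (insert e G) v = (if v ∈ e then 1 else 0) + deg G v := by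
  rw [deg, deg, Finset.filter_insert]
  split_ifs with hv
  · rw [Finset.card_insert_of_notMem (fun hc => h (Finset.mem_of_mem_filter e hc))]
    omega
  · omega

lemma deg_image (σ : Equiv.Perm Node) (W : Graph) (v : Node) :
    deg (W.image (fun e => e.image σ)) (σ v) = deg W v := by
  rw [deg, deg]
  have key : (W.image (fun e => e.image σ)).filter (fun e => σ v ∈ e)
      = (W.filter (fun e => v ∈ e)).image (fun e => e.image σ) := by
    ext e'
    simp only [Finset.mem_filter, Finset.mem_image]
    constructor
    · rintro ⟨⟨e, he, rfl⟩, hv⟩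
      exact ⟨e, ⟨he, by simpa [Finset.mem_image, σ.injective.eq_iff] using hv⟩, rfl⟩
    · rintro ⟨e, ⟨he, hv⟩, rfl⟩
      exact ⟨⟨e, he, rfl⟩, Finset.mem_image_of_mem _ hv⟩
  rw [key, Finset.card_image_of_injective _ (Finset.image_injective σ.injective)]

/-- Translating a Kekulé cell by a single port flip. -/
lemma cell_flip (P : Finset Node) (K : Set (Finset Node)) (hK : IsKekuleCell P K)
    {p : Node} (hp : p ∈ P) :
    IsKekuleCell P ((fun k => ({p} : Finset Node) ∆ k) '' K) := by
  classical
  obtain ⟨G, hG, hports, rfl⟩ := hK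
  obtain ⟨q, hqfresh⟩ : ∃ q, q ∉ nodes G :=
    ⟨(nodes G).sup id + 1, fun h => by
      have := Finset.le_sup (f := id) h
      simp only [id_eq] at this
      exact Nat.not_succ_le_self _ this⟩
  have hdegp : deg G p = 1 := mem_ports.mp (by rw [hports]; exact hp)
  have hdegq : deg G q = 0 := by
    by_contra h; exact hqfresh (deg_ne_zero.mp h)
  have hpn : p ∈ nodes G := deg_ne_zero.mp (by omega)
  have hpq : p ≠ q := fun h => hqfresh (h ▸ hpn)
  have hPn : ∀ v ∈ P, v ∈ nodes G := by
    intro v hv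
    rw [← hports] at hv
    exact Finset.mem_of_mem_filter v hv
  have hqP : q ∉ P := fun h => hqfresh (hPn q h)
  have hWfresh : ∀ W : Graph, W ⊆ G →
      ({p, q} : Finset Node) ∉ W.image (fun e => e.image (Equiv.swap p q)) := by
    intro W hW h
    rw [Finset.mem_image] at h
    obtain ⟨e, he, heq⟩ := h
    have hpmem : p ∈ e.image (Equiv.swap p q) := by rw [heq]; simp
    rw [Finset.mem_image] at hpmem
    obtain ⟨x, hx, hxp⟩ := hpmem
    have hxq : x = q := by
      have h2 := congrArg (Equiv.swap p q) hxp
      rwa [Equiv.swap_apply_self, Equiv.swap_apply_left] at h2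
    exact hqfresh (mem_nodes.mpr ⟨e, hW he, hxq ▸ hx⟩)
  have hdegim : ∀ (W : Graph) (v : Node),
      deg (W.image (fun e => e.image (Equiv.swap p q))) v = deg W (Equiv.swap p q v) := by
    intro W v
    have h := deg_image (Equiv.swap p q) W (Equiv.swap p q v)
    rwa [Equiv.swap_apply_self] at h
  set G' : Graph :=
    insert ({p, q} : Finset Node) (G.image (fun e => e.image (Equiv.swap p q))) with hG'def
  have hdegG' : ∀ v, deg G' v =
      (if v ∈ ({p, q} : Finset Node) then 1 else 0) + deg G (Equiv.swap p q v) := by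
    intro v
    rw [hG'def, deg_insert (hWfresh G (fun _ h => h)), hdegim]
  have hswap : ∀ v, v ≠ p → v ≠ q → Equiv.swap p q v = v :=
    fun v h1 h2 => Equiv.swap_apply_of_ne_of_ne h1 h2
  have hdegG'p : deg G' p = 1 := by
    rw [hdegG']; simp [Equiv.swap_apply_left, hdegq]
  have hdegG'q : deg G' q = 2 := by
    rw [hdegG']; simp [Equiv.swap_apply_right, hdegp]
  have hdegG'v : ∀ v, v ≠ p → v ≠ q → deg G' v = deg G v := by
    intro v h1 h2
    rw [hdegG', hswap v h1 h2]
    simp [h1, h2]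
  have hports' : ports G' = P := by
    rw [← hports]
    ext v
    rw [mem_ports, mem_ports]
    by_cases h1 : v = p
    · subst h1; simp [hdegG'p, hdegp]
    by_cases h2 : v = q
    · subst h2; simp [hdegG'q, hdegq]
    · rw [hdegG'v v h1 h2]
  -- canonical lift of a Kekulé state of G to G'
  have AUX : ∀ W : Graph, IsKekule G W → ∀ W' : Graph,
      W' = (if deg W p = 1 then W.image (fun e => e.image (Equiv.swap p q))
        else insert ({p, q} : Finset Node) (W.image (fun e => e.image (Equiv.swap p q)))) →
      IsKekule G' W' ∧ rest W' P = ({p} : Finset Node) ∆ rest W P := by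
    intro W hW W' hW'def
    obtain ⟨hWsub, hWkek⟩ := hW
    have hdegWq : deg W q = 0 := Nat.le_zero.mp (hdegq ▸ deg_mono hWsub q)
    have hdegWp : deg W p ≤ 1 := hdegp ▸ deg_mono hWsub p
    have hdegW' : ∀ v, deg W' v =
        (if deg W p ≠ 1 ∧ v ∈ ({p, q} : Finset Node) then 1 else 0)
          + deg W (Equiv.swap p q v) := by
      intro v
      by_cases hc : deg W p = 1
      · rw [hW'def, if_pos hc, hdegim]
        simp [hc]
      · rw [hW'def, if_neg hc, deg_insert (hWfresh W hWsub), hdegim]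
        simp [hc]
    have hW'sub : W' ⊆ G' := by
      rw [hW'def, hG'def]
      split_ifs
      · exact fun e he => Finset.mem_insert_of_mem (Finset.image_subset_image hWsub he)
      · intro e he
        rcases Finset.mem_insert.mp he with rfl | he
        · exact Finset.mem_insert_self _ _
        · exact Finset.mem_insert_of_mem (Finset.image_subset_image hWsub he)
    constructor
    · refine ⟨hW'sub, ?_⟩
      intro v hv
      rw [mem_internal] at hv
      by_cases h1 : v = p
      · exact absurd (h1 ▸ hdegG'p) hv.2
      by_cases h2 : v = q
      · rw [h2, hdegW', Equiv.swap_apply_right]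
        by_cases hc : deg W p = 1 <;> simp [hc] <;> omega
      · have hvG : v ∈ internal G :=
          mem_internal.mpr ⟨by rw [← hdegG'v v h1 h2]; exact hv.1,
            by rw [← hdegG'v v h1 h2]; exact hv.2⟩
        rw [hdegW', hswap v h1 h2]
        simp only [Finset.mem_insert, Finset.mem_singleton]
        rw [if_neg (by tauto), Nat.zero_add]
        exact hWkek v hvG
    · ext v
      simp only [mem_rest, Finset.mem_symmDiff, Finset.mem_singleton]
      by_cases h1 : v = p
      · rw [h1, hdegW', Equiv.swap_apply_left, hdegWq]
        by_cases hc : deg W p = 1 <;> simp [hc, hp] <;> omega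
      by_cases h2 : v = q
      · rw [h2]
        simp [hqP, Ne.symm hpq]
      · rw [hdegW', hswap v h1 h2]
        simp only [Finset.mem_insert, Finset.mem_singleton]
        rw [if_neg (by tauto)]
        simp [h1]
  refine ⟨G', ?_, hports', ?_⟩
  · intro e he
    rw [hG'def, Finset.mem_insert] at he
    rcases he with rfl | he
    · exact Finset.card_pair hpq
    · rw [Finset.mem_image] at he
      obtain ⟨e', he', rfl⟩ := he
      rw [Finset.card_image_of_injective _ (Equiv.injective _)]
      exact hG e' he'
  · ext k
    simp only [KP, Set.mem_setOf_eq, Set.mem_image]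
    constructor
    · rintro ⟨W', ⟨hW'sub, hW'kek⟩, rfl⟩
      set W : Graph := G.filter (fun e => e.image (Equiv.swap p q) ∈ W') with hWdef
      have hWsub : W ⊆ G := Finset.filter_subset _ _
      have hdegWq : deg W q = 0 := Nat.le_zero.mp (hdegq ▸ deg_mono hWsub q)
      have hdegWp : deg W p ≤ 1 := hdegp ▸ deg_mono hWsub p
      have hdecomp : W' = (if ({p, q} : Finset Node) ∈ W'
          then insert ({p, q} : Finset Node) (W.image (fun e => e.image (Equiv.swap p q)))
          else W.image (fun e => e.image (Equiv.swap p q))) := by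
        ext e'
        constructor
        · intro he'
          have hG'mem := hW'sub he'
          rw [hG'def, Finset.mem_insert] at hG'mem
          rcases hG'mem with rfl | hmem
          · rw [if_pos he']
            exact Finset.mem_insert_self _ _
          · rw [Finset.mem_image] at hmem
            obtain ⟨e, he, rfl⟩ := hmem
            have heW : e ∈ W := Finset.mem_filter.mpr ⟨he, he'⟩
            split_ifs
            · exact Finset.mem_insert_of_mem (Finset.mem_image_of_mem _ heW)
            · exact Finset.mem_image_of_mem _ heW
        · intro he'
          split_ifs at he' with hc
          · rcases Finset.mem_insert.mp he' with rfl | he'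
            · exact hc
            · rw [Finset.mem_image] at he'
              obtain ⟨e, he, rfl⟩ := he'
              exact (Finset.mem_filter.mp he).2
          · rw [Finset.mem_image] at he'
            obtain ⟨e, he, rfl⟩ := he'
            exact (Finset.mem_filter.mp he).2
      have hqint : q ∈ internal G' := mem_internal.mpr (by rw [hdegG'q]; omega)
      have hdegW'q : deg W' q = 1 := hW'kek q hqint
      have hkey : ({p, q} : Finset Node) ∈ W' ↔ deg W p ≠ 1 := by
        rw [hdecomp] at hdegW'q
        constructor
        · intro hc
          rw [if_pos hc, deg_insert (hWfresh W hWsub), hdegim,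
            Equiv.swap_apply_right] at hdegW'q
          simp at hdegW'q
          omega
        · intro hc
          by_contra hc'
          rw [if_neg hc', hdegim, Equiv.swap_apply_right] at hdegW'q
          exact hc hdegW'q
      have hcanon : W' = (if deg W p = 1 then W.image (fun e => e.image (Equiv.swap p q))
          else insert ({p, q} : Finset Node) (W.image (fun e => e.image (Equiv.swap p q)))) := by
        rw [hdecomp]
        by_cases hc : ({p, q} : Finset Node) ∈ W'
        · rw [if_pos hc, if_neg (hkey.mp hc)]
        · rw [if_neg hc, if_pos (by by_contra h; exact hc (hkey.mpr h))]
      have hWkek : IsKekule G W := by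
        refine ⟨hWsub, ?_⟩
        intro v hv
        have hv' := mem_internal.mp hv
        have h1 : v ≠ p := fun h => hv'.2 (h ▸ hdegp)
        have h2 : v ≠ q := fun h => hv'.1 (h ▸ hdegq)
        have hvG' : v ∈ internal G' :=
          mem_internal.mpr ⟨by rw [hdegG'v v h1 h2]; exact hv'.1,
            by rw [hdegG'v v h1 h2]; exact hv'.2⟩
        have := hW'kek v hvG'
        rw [hdecomp] at this
        split_ifs at this with hc
        · rw [deg_insert (hWfresh W hWsub), hdegim, hswap v h1 h2] at this
          simp only [Finset.mem_insert, Finset.mem_singleton] at this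
          rw [if_neg (by tauto)] at this
          omega
        · rwa [hdegim, hswap v h1 h2] at this
      obtain ⟨_, hrest⟩ := AUX W hWkek W' hcanon
      exact ⟨rest W (ports G), ⟨W, hWkek, rfl⟩, by
        rw [hports, hports', ← hrest]⟩
    · rintro ⟨k₀, ⟨W, hWkek, rfl⟩, rfl⟩
      obtain ⟨hkek', hrest⟩ := AUX W hWkek _ rfl
      exact ⟨_, hkek', by rw [hports, hports']; exact hrest⟩

/-- A translate of a Kekulé cell is a Kekulé cell. -/
theorem statement4 (P : Finset Node) (K : Set (Finset Node))
    (hK : IsKekuleCell P K) (g : Finset Node) (hg : g ⊆ P) :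
    IsKekuleCell P ((fun k => g ∆ k) '' K) := by
  classical
  revert hg
  induction g using Finset.induction_on with
  | empty =>
    intro _
    have heq : (fun k => (∅ : Finset Node) ∆ k) = id := funext fun k => bot_symmDiff k
    rwa [heq, Set.image_id]
  | @insert a s ha ih =>
    intro hins
    have haP : a ∈ P := hins (Finset.mem_insert_self a s)
    have hsP : s ⊆ P := fun x hx => hins (Finset.mem_insert_of_mem hx)
    have h2 := cell_flip P _ (ih hsP) haP
    have heq : ((fun k => ({a} : Finset Node) ∆ k) '' ((fun k => s ∆ k) '' K))
        = (fun k => (insert a s) ∆ k) '' K := by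
      rw [← Set.image_comp]
      have hfun : ((fun k => ({a} : Finset Node) ∆ k) ∘ (fun k => s ∆ k))
          = (fun k => (insert a s) ∆ k) := by
        funext k
        show ({a} : Finset Node) ∆ (s ∆ k) = (insert a s) ∆ k
        rw [← symmDiff_assoc]
        congr 1
        ext x
        simp only [Finset.mem_symmDiff, Finset.mem_singleton, Finset.mem_insert]
        by_cases hx : x = a
        · subst hx; simp [ha]
        · simp [hx]
      rw [hfun]
    rwa [heq] at h2
end Kekule
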